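/- If a finite set A tiles the integers, then there is a tiling A ⊕ C = ℤ whose period n is a product of powers of primes dividing #A (i.e., every prime factor of n divides #A). -/

import Mathlib

open Finset

/-- `A ⊕ C = ℤ`: every integer has a unique representation `a + c`. -/
def IsTiling (A : Set ℤ) (C : Set ℤ) : Prop :=
  ∀ z : ℤ, ∃! p : ℤ × ℤ, p.1 ∈ A ∧ p.2 ∈ C ∧ p.1 + p.2 = z

private lemma existsUnique_of_sum_eq_one {α : Type*} [DecidableEq α] {s : Finset α} {f : α → ℕ}
    (h : ∑ a ∈ s, f a = 1) : ∃! a, a ∈ s ∧ f a ≠ 0 := by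
  obtain ⟨a, has, hfa⟩ := Finset.exists_ne_zero_of_sum_ne_zero (by simp [h] : ∑ a ∈ s, f a ≠ 0)
  refine ⟨a, ⟨has, hfa⟩, ?_⟩
  rintro b ⟨hbs, hfb⟩
  by_contra hne
  have hsub : ({a, b} : Finset α) ⊆ s := by
    intro x hx; simp at hx; rcases hx with rfl | rfl <;> assumption
  have h2 : f a + f b ≤ ∑ a ∈ s, f a := by
    calc f a + f b = ∑ x ∈ ({a, b} : Finset α), f x := (Finset.sum_pair (Ne.symm hne)).symm
    _ ≤ ∑ a ∈ s, f a := Finset.sum_le_sum_of_subset hsub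
  omega

private lemma sum_ite_eq_one {α : Type*} {s : Finset α} {P : α → Prop} [DecidablePred P]
    (h : ∃! a, a ∈ s ∧ P a) : (∑ a ∈ s, if P a then 1 else 0) = 1 := by
  obtain ⟨a0, ⟨ha0s, ha0⟩, hu⟩ := h
  rw [← Finset.card_filter]
  rw [Finset.card_eq_one]
  exact ⟨a0, Finset.eq_singleton_iff_unique_mem.2 ⟨Finset.mem_filter.2 ⟨ha0s, ha0⟩,
    fun x hx => hu x (Finset.mem_filter.1 hx)⟩⟩

private lemma period_mul {C : Set ℤ} {s : ℤ} (hs : ∀ c, c ∈ C ↔ c + s ∈ C) :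
    ∀ t : ℤ, ∀ c, c ∈ C ↔ c + s * t ∈ C := by
  intro t
  induction t using Int.induction_on with
  | zero => simp
  | succ n ih =>
    intro c
    have h2 := hs (c + s * n)
    have e : c + s * (n : ℤ) + s = c + s * ((n : ℤ) + 1) := by ring
    rw [e] at h2
    exact (ih c).trans h2
  | pred n ih =>
    intro c
    have h2 := hs (c + s * (-(n : ℤ) - 1))
    have e : c + s * (-(n : ℤ) - 1) + s = c + s * (-(n : ℤ)) := by ring
    rw [e] at h2
    exact (ih c).trans h2.symm

private lemma key_of_tiling {A : Finset ℤ} {C : Set ℤ} (ht : IsTiling ↑A C) :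
    ∀ z : ℤ, ∃! a, a ∈ A ∧ z - a ∈ C := by
  intro z
  obtain ⟨p, ⟨hp1, hp2, hp3⟩, hu⟩ := ht z
  refine ⟨p.1, ⟨hp1, by rw [show z - p.1 = p.2 from by omega]; exact hp2⟩, ?_⟩
  rintro a ⟨haA, haC⟩
  have := hu (a, z - a) ⟨haA, haC, by ring⟩
  rw [← this]

private lemma exists_pos_period {A : Finset ℤ} {C : Set ℤ} (ht : IsTiling ↑A C) :
    ∃ s : ℤ, 0 < s ∧ ∀ c, c ∈ C ↔ c + s ∈ C := by
  classical
  have key := key_of_tiling ht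
  have hne : A.Nonempty := by
    obtain ⟨a, ⟨ha, _⟩, _⟩ := key 0
    exact ⟨a, ha⟩
  set mA := A.min' hne with hmA
  set xA := A.max' hne with hxA
  have hmle : ∀ a ∈ A, mA ≤ a := fun a ha => A.min'_le a ha
  have hxge : ∀ a ∈ A, a ≤ xA := fun a ha => A.le_max' a ha
  set L : ℤ := xA - mA with hL
  have hL0 : 0 ≤ L := by have := hmle xA (A.max'_mem hne); omega
  have stepF : ∀ Z : ℤ, (Z - mA ∈ C ↔ ∀ a ∈ A, a ≠ mA → Z - a ∉ C) := by
    intro Z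
    obtain ⟨a0, ⟨ha0A, ha0C⟩, hu⟩ := key Z
    constructor
    · intro hC a haA hane haC
      have h1 := hu mA ⟨A.min'_mem hne, hC⟩
      have h2 := hu a ⟨haA, haC⟩
      exact hane (h2.trans h1.symm)
    · intro hall
      by_cases h : a0 = mA
      · rw [← h]; exact ha0C
      · exact absurd ha0C (hall a0 ha0A h)
  have stepB : ∀ Z : ℤ, (Z - xA ∈ C ↔ ∀ a ∈ A, a ≠ xA → Z - a ∉ C) := by
    intro Z
    obtain ⟨a0, ⟨ha0A, ha0C⟩, hu⟩ := key Z
    constructor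
    · intro hC a haA hane haC
      have h1 := hu xA ⟨A.max'_mem hne, hC⟩
      have h2 := hu a ⟨haA, haC⟩
      exact hane (h2.trans h1.symm)
    · intro hall
      by_cases h : a0 = xA
      · rw [← h]; exact ha0C
      · exact absurd ha0C (hall a0 ha0A h)
  have prop : ∀ s t : ℤ, (∀ i, t ≤ i → i < t + L → (i ∈ C ↔ i + s ∈ C)) →
      ∀ i, (i ∈ C ↔ i + s ∈ C) := by
    intro s t hwin
    have up : ∀ w, (∀ i, w - L ≤ i → i < w → (i ∈ C ↔ i + s ∈ C)) →
        (w ∈ C ↔ w + s ∈ C) := by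
      intro w hw
      have e1 := stepF (w + mA)
      have e2 := stepF (w + mA + s)
      rw [show w + mA - mA = w from by ring] at e1
      rw [show w + mA + s - mA = w + s from by ring] at e2
      rw [e1, e2]
      constructor
      · intro hall a haA hane hc
        have hmlt : mA < a := lt_of_le_of_ne (hmle a haA) (Ne.symm hane)
        have hi := hw (w + mA - a) (by have := hxge a haA; omega) (by omega)
        exact hall a haA hane
          (hi.2 (by rwa [show w + mA - a + s = w + mA + s - a from by ring]))
      · intro hall a haA hane hc
        have hmlt : mA < a := lt_of_le_of_ne (hmle a haA) (Ne.symm hane)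
        have hi := hw (w + mA - a) (by have := hxge a haA; omega) (by omega)
        exact hall a haA hane
          (by rw [show w + mA + s - a = w + mA - a + s from by ring]; exact hi.1 hc)
    have down : ∀ w, (∀ i, w < i → i ≤ w + L → (i ∈ C ↔ i + s ∈ C)) →
        (w ∈ C ↔ w + s ∈ C) := by
      intro w hw
      have e1 := stepB (w + xA)
      have e2 := stepB (w + xA + s)
      rw [show w + xA - xA = w from by ring] at e1
      rw [show w + xA + s - xA = w + s from by ring] at e2
      rw [e1, e2]
      constructor
      · intro hall a haA hane hc
        have hmlt : a < xA := lt_of_le_of_ne (hxge a haA) hane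
        have hi := hw (w + xA - a) (by omega) (by have := hmle a haA; omega)
        exact hall a haA hane
          (hi.2 (by rwa [show w + xA - a + s = w + xA + s - a from by ring]))
      · intro hall a haA hane hc
        have hmlt : a < xA := lt_of_le_of_ne (hxge a haA) hane
        have hi := hw (w + xA - a) (by omega) (by have := hmle a haA; omega)
        exact hall a haA hane
          (by rw [show w + xA + s - a = w + xA - a + s from by ring]; exact hi.1 hc)
    have hup : ∀ d : ℕ, ((t + d) ∈ C ↔ (t + d) + s ∈ C) := by
      intro d
      induction d using Nat.strong_induction_on with
      | _ d ih =>
        by_cases hd : (d : ℤ) < L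
        · exact hwin (t + d) (by omega) (by omega)
        · apply up (t + d)
          intro i hi1 hi2
          have : i = t + ((i - t).toNat : ℤ) := by omega
          rw [this]
          exact ih (i - t).toNat (by omega)
    have hgea : ∀ i, t ≤ i → (i ∈ C ↔ i + s ∈ C) := by
      intro i hi
      have := hup (i - t).toNat
      rwa [show t + ((i - t).toNat : ℤ) = i from by omega] at this
    have hdown : ∀ e : ℕ, ((t - e) ∈ C ↔ (t - e) + s ∈ C) := by
      intro e
      induction e using Nat.strong_induction_on with
      | _ e ih =>
        apply down (t - e)
        intro i hi1 hi2
        by_cases hti : t ≤ i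
        · exact hgea i hti
        · have : i = t - ((t - i).toNat : ℤ) := by omega
          rw [this]
          exact ih (t - i).toNat (by omega)
    intro i
    by_cases hti : t ≤ i
    · exact hgea i hti
    · have := hdown (t - i).toNat
      rwa [show t - ((t - i).toNat : ℤ) = i from by omega] at this
  set Ln := L.toNat with hLn
  have hLnL : (Ln : ℤ) = L := Int.toNat_of_nonneg hL0
  set f : Fin (2 ^ Ln + 1) → Fin Ln → Bool :=
    fun j r => decide ((((j : ℕ) : ℤ) + ((r : ℕ) : ℤ)) ∈ C) with hf
  have hcard : Fintype.card (Fin Ln → Bool) < Fintype.card (Fin (2 ^ Ln + 1)) := by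
    simp
  obtain ⟨j1, j2, hne12, hfeq⟩ := Fintype.exists_ne_map_eq_of_card_lt f hcard
  have main : ∀ u v : Fin (2 ^ Ln + 1), u < v → f u = f v →
      ∃ s : ℤ, 0 < s ∧ ∀ c, c ∈ C ↔ c + s ∈ C := by
    intro u v huv hfe
    have huv' : (u : ℕ) < (v : ℕ) := huv
    refine ⟨((v : ℕ) : ℤ) - ((u : ℕ) : ℤ), by omega, ?_⟩
    refine prop _ ((u : ℕ) : ℤ) ?_
    intro i h1 h2
    have hr : (i - ((u : ℕ) : ℤ)).toNat < Ln := by omega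
    have h3 := congrFun hfe (⟨(i - ((u : ℕ) : ℤ)).toNat, hr⟩ : Fin Ln)
    simp only [hf] at h3
    rw [show ((((⟨(i - ((u : ℕ) : ℤ)).toNat, hr⟩ : Fin Ln) : ℕ) : ℤ)) =
      (i - ((u : ℕ) : ℤ)) from by simp; omega] at h3
    rw [show (((u : ℕ) : ℤ)) + (i - ((u : ℕ) : ℤ)) = i from by ring] at h3
    rw [show (((v : ℕ) : ℤ)) + (i - ((u : ℕ) : ℤ)) = i + ((((v : ℕ) : ℤ)) - ((u : ℕ) : ℤ))
      from by ring] at h3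
    exact decide_eq_decide.mp h3
  rcases lt_or_gt_of_ne hne12 with hlt | hlt
  · exact main j1 j2 hlt hfeq
  · exact main j2 j1 hlt hfeq.symm

private lemma tilesMod_of_period {A : Finset ℤ} {C : Set ℤ} (ht : IsTiling ↑A C)
    {M : ℕ} (hM : 0 < M) (hper : ∀ c, c ∈ C ↔ c + (M : ℤ) ∈ C) :
    ∃ g : ZMod M → ℕ, ∀ z : ZMod M, ∑ a ∈ A, g (z - (a : ZMod M)) = 1 := by
  classical
  haveI : NeZero M := ⟨hM.ne'⟩
  have hcong : ∀ c₁ c₂ : ℤ, (c₁ : ZMod M) = (c₂ : ZMod M) → (c₁ ∈ C ↔ c₂ ∈ C) := by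
    intro c₁ c₂ hc
    have hdvd : (M : ℤ) ∣ c₂ - c₁ := by
      rw [← ZMod.intCast_zmod_eq_zero_iff_dvd]
      push_cast
      rw [hc]; ring
    obtain ⟨t, htt⟩ := hdvd
    have := period_mul hper t c₁
    rwa [show c₁ + (M : ℤ) * t = c₂ from by omega] at this
  refine ⟨fun d => if ((d.val : ℤ) ∈ C) then 1 else 0, ?_⟩
  intro z
  have hZ : (((z.val : ℤ)) : ZMod M) = z := by
    push_cast
    exact ZMod.natCast_rightInverse z
  have hterm : ∀ a : ℤ, (if ((((z - (a : ZMod M)).val : ℤ)) ∈ C) then 1 else 0) =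
      (if ((z.val : ℤ) - a ∈ C) then 1 else 0) := by
    intro a
    congr 1
    apply propext
    apply hcong
    push_cast
    rw [ZMod.natCast_rightInverse (z - (a : ZMod M)),
      show ((z.val : ℕ) : ZMod M) = z from ZMod.natCast_rightInverse z]
  calc (∑ a ∈ A, if ((((z - (a : ZMod M)).val : ℤ)) ∈ C) then 1 else 0)
      = ∑ a ∈ A, if ((z.val : ℤ) - a ∈ C) then 1 else 0 :=
        Finset.sum_congr rfl (fun a _ => hterm a)
    _ = 1 := sum_ite_eq_one (key_of_tiling ht (z.val : ℤ))

private lemma prime_step {A : Finset ℤ} {M p : ℕ} [NeZero M] (hp : p.Prime)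
    (hpk : ¬ p ∣ A.card) (g : ZMod M → ℕ) (r : ℕ)
    (hQ : ∀ z : ZMod M, ∑ a ∈ A, g (z - (r : ZMod M) * (a : ZMod M)) = 1) :
    ∀ z : ZMod M, ∑ a ∈ A, g (z - ((p * r : ℕ) : ZMod M) * (a : ZMod M)) = 1 := by
  classical
  haveI : Fact p.Prime := ⟨hp⟩
  set R := AddMonoidAlgebra (ZMod p) (ZMod M) with hR
  set F : ℕ → R := fun q => ∑ a ∈ A,
    AddMonoidAlgebra.single ((q : ZMod M) * (a : ZMod M)) (1 : ZMod p) with hF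
  set G : R := ∑ d : ZMod M, AddMonoidAlgebra.single d ((g d : ZMod p)) with hG
  set U : R := ∑ z : ZMod M, AddMonoidAlgebra.single z (1 : ZMod p) with hU
  have hmulG : ∀ x : ZMod M, AddMonoidAlgebra.single x (1 : ZMod p) * G =
      ∑ w : ZMod M, AddMonoidAlgebra.single w ((g (w - x) : ZMod p)) := by
    intro x
    rw [hG, Finset.mul_sum]
    rw [show (∑ d : ZMod M, AddMonoidAlgebra.single x (1 : ZMod p) *
        AddMonoidAlgebra.single d ((g d : ZMod p))) =
        ∑ d : ZMod M, AddMonoidAlgebra.single (x + d) ((g d : ZMod p)) from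
      Finset.sum_congr rfl (fun d _ => by rw [AddMonoidAlgebra.single_mul_single, one_mul])]
    exact Fintype.sum_equiv (Equiv.addLeft x)
      (fun d => AddMonoidAlgebra.single (x + d) ((g ((x + d) - x) : ZMod p)))
      (fun w => AddMonoidAlgebra.single w ((g (w - x) : ZMod p)))
      (fun d => rfl) |>.symm.trans
      (Finset.sum_congr rfl (fun d _ => by rw [add_sub_cancel_left])) |>.symm
  have hmulU : ∀ x : ZMod M, AddMonoidAlgebra.single x (1 : ZMod p) * U = U := by
    intro x
    rw [hU, Finset.mul_sum]
    rw [show (∑ z : ZMod M, AddMonoidAlgebra.single x (1 : ZMod p) *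
        AddMonoidAlgebra.single z (1 : ZMod p)) =
        ∑ z : ZMod M, AddMonoidAlgebra.single (x + z) (1 : ZMod p) from
      Finset.sum_congr rfl (fun z _ => by rw [AddMonoidAlgebra.single_mul_single, one_mul])]
    exact Fintype.sum_equiv (Equiv.addLeft x)
      (fun z => AddMonoidAlgebra.single (x + z) (1 : ZMod p))
      (fun w => AddMonoidAlgebra.single w (1 : ZMod p)) (fun z => rfl)
  have hFG : ∀ q : ℕ, F q * G = ∑ w : ZMod M,
      AddMonoidAlgebra.single w ((∑ a ∈ A, g (w - (q : ZMod M) * a) : ℕ) : ZMod p) := by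
    intro q
    rw [hF]
    simp only []
    rw [Finset.sum_mul]
    rw [Finset.sum_congr rfl (fun a (_ : a ∈ A) => hmulG ((q : ZMod M) * (a : ZMod M)))]
    rw [Finset.sum_comm]
    refine Finset.sum_congr rfl (fun w _ => ?_)
    rw [Nat.cast_sum A (fun a => g (w - (q : ZMod M) * a))]
    exact (map_sum (AddMonoidAlgebra.singleAddHom w) (fun a : ℤ => ((g (w - (q : ZMod M) * a) : ZMod p))) A).symm
  have hcoeff : ∀ (c : ZMod M → ZMod p) (z : ZMod M),
      (∑ w : ZMod M, AddMonoidAlgebra.single w (c w) : R).coeff z = c z := by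
    intro c z
    rw [AddMonoidAlgebra.coeff_sum, Finsupp.finset_sum_apply]
    simp [AddMonoidAlgebra.coeff_single, Finsupp.single_apply]
  have hinj : Function.Injective (algebraMap (ZMod p) (AddMonoidAlgebra (ZMod p) (ZMod M))) := by
    intro x y hxy
    have h2 := congrArg (fun (F : AddMonoidAlgebra (ZMod p) (ZMod M)) => F.coeff (0 : ZMod M)) hxy
    simp only [AddMonoidAlgebra.coe_algebraMap, Function.comp_apply, Algebra.algebraMap_self,
      RingHom.id_apply, AddMonoidAlgebra.coeff_single] at h2
    rwa [Finsupp.single_apply, Finsupp.single_apply, if_pos rfl, if_pos rfl] at h2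
  haveI : CharP R p := charP_of_injective_algebraMap hinj p
  have hGU : F r * G = U := by
    rw [hFG r, hU]
    refine Finset.sum_congr rfl (fun w _ => ?_)
    rw [hQ w, Nat.cast_one]
  have hFU : ∀ q : ℕ, F q * U = (A.card : ZMod p) • U := by
    intro q
    rw [hF]
    simp only []
    rw [Finset.sum_mul]
    rw [Finset.sum_congr rfl (fun a (_ : a ∈ A) => hmulU ((q : ZMod M) * (a : ZMod M)))]
    rw [Finset.sum_const, Nat.cast_smul_eq_nsmul]
  have hpowU : ∀ m : ℕ, (F r) ^ m * U = ((A.card : ZMod p)) ^ m • U := by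
    intro m
    induction m with
    | zero => rw [pow_zero, one_mul, pow_zero, one_smul]
    | succ m ih =>
      rw [pow_succ, mul_assoc, hFU r, mul_smul_comm, ih, smul_smul, ← pow_succ']
  have hFrob : (F r) ^ p = F (p * r) := by
    rw [hF]
    simp only []
    rw [sum_pow_char]
    refine Finset.sum_congr rfl (fun a _ => ?_)
    rw [AddMonoidAlgebra.single_pow, one_pow, nsmul_eq_mul]
    congr 1
    push_cast
    ring
  have hkne : (A.card : ZMod p) ≠ 0 := by
    intro hcontra
    exact hpk ((ZMod.natCast_eq_zero_iff _ _).1 hcontra)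
  have hmain : F (p * r) * G = U := by
    have h1 : F (p * r) * G = (F r) ^ (p - 1) * (F r * G) := by
      rw [← hFrob, ← mul_assoc, ← pow_succ, Nat.sub_add_cancel hp.one_lt.le]
    rw [h1, hGU, hpowU, ZMod.pow_card_sub_one_eq_one hkne, one_smul]
  have hNz : ∀ z : ZMod M, ((∑ a ∈ A, g (z - ((p * r : ℕ) : ZMod M) * a) : ℕ) : ZMod p) = 1 := by
    intro z
    have h1 := congrArg (fun (x : R) => x.coeff z) hmain
    rw [hFG (p * r)] at h1
    rw [hcoeff] at h1
    rw [hU, hcoeff (fun _ => (1 : ZMod p))] at h1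
    exact h1
  have hNpos : ∀ z : ZMod M, 1 ≤ ∑ a ∈ A, g (z - ((p * r : ℕ) : ZMod M) * a) := by
    intro z
    rcases Nat.eq_zero_or_pos (∑ a ∈ A, g (z - ((p * r : ℕ) : ZMod M) * a)) with h0 | h1
    · exfalso
      have := hNz z
      rw [h0] at this
      simp at this
    · exact h1
  have total : ∀ q : ℕ, ∑ z : ZMod M, (∑ a ∈ A, g (z - (q : ZMod M) * a)) =
      A.card * ∑ w : ZMod M, g w := by
    intro q
    rw [Finset.sum_comm]
    rw [Finset.sum_congr rfl (fun a (_ : a ∈ A) =>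
      Fintype.sum_equiv (Equiv.subRight ((q : ZMod M) * (a : ZMod M)))
        (fun z => g (z - (q : ZMod M) * a)) g (fun z => rfl))]
    rw [Finset.sum_const, smul_eq_mul]
  have hMcard : A.card * ∑ w : ZMod M, g w = M := by
    have h1 := total r
    rw [Finset.sum_congr rfl (fun z (_ : z ∈ Finset.univ) => hQ z)] at h1
    rw [Finset.sum_const, smul_eq_mul, mul_one, Finset.card_univ, ZMod.card] at h1
    omega
  have hsums : ∑ z : ZMod M, (1 : ℕ) = ∑ z : ZMod M,
      (∑ a ∈ A, g (z - ((p * r : ℕ) : ZMod M) * a)) := by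
    rw [total (p * r), hMcard]
    rw [Finset.sum_const, smul_eq_mul, mul_one, Finset.card_univ, ZMod.card]
  intro z
  have := (Finset.sum_eq_sum_iff_of_le (fun i _ => hNpos i)).1 hsums z (Finset.mem_univ z)
  omega

private lemma descend {A : Finset ℤ} {M p : ℕ} (hp : p.Prime) (hpM : p ∣ M) (hM : 0 < M)
    (g : ZMod M → ℕ)
    (hQ : ∀ z : ZMod M, ∑ a ∈ A, g (z - (p : ZMod M) * (a : ZMod M)) = 1) :
    ∃ g2 : ZMod (M / p) → ℕ,
      ∀ z : ZMod (M / p), ∑ a ∈ A, g2 (z - (a : ZMod (M / p))) = 1 := by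
  classical
  have hM' : 0 < M / p := Nat.div_pos (Nat.le_of_dvd hM hpM) hp.pos
  haveI : NeZero M := ⟨hM.ne'⟩
  haveI : NeZero (M / p) := ⟨hM'.ne'⟩
  have hpM' : p * (M / p) = M := Nat.mul_div_cancel' hpM
  refine ⟨fun w => g (((p * w.val : ℕ) : ZMod M)), ?_⟩
  intro z
  have hterm : ∀ a : ℤ, (((p * (z - (a : ZMod (M / p))).val : ℕ) : ZMod M)) =
      (((p * z.val : ℕ) : ZMod M)) - (p : ZMod M) * (a : ZMod M) := by
    intro a
    have h1 : ((M / p : ℕ) : ℤ) ∣ (((z - (a : ZMod (M / p))).val : ℤ) - ((z.val : ℤ) - a)) := by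
      rw [← ZMod.intCast_zmod_eq_zero_iff_dvd]
      push_cast
      rw [show (((z - (a : ZMod (M / p))).val : ℕ) : ZMod (M / p)) = z - (a : ZMod (M / p)) from
        ZMod.natCast_rightInverse _,
        show ((z.val : ℕ) : ZMod (M / p)) = z from ZMod.natCast_rightInverse z]
      ring
    obtain ⟨t, ht⟩ := h1
    have hM2 : (M : ℤ) = (p : ℤ) * ((M / p : ℕ) : ℤ) := by exact_mod_cast hpM'.symm
    have h2 : ((p * (z - (a : ZMod (M / p))).val : ℕ) : ℤ) =
        ((p * z.val : ℕ) : ℤ) - (p : ℤ) * a + (M : ℤ) * t := by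
      push_cast
      linear_combination (p : ℤ) * ht - t * hM2
    have h3 : (((p * (z - (a : ZMod (M / p))).val : ℕ) : ℤ) : ZMod M) =
        ((((p * z.val : ℕ) : ℤ) - (p : ℤ) * a : ℤ) : ZMod M) := by
      rw [h2]
      push_cast [ZMod.natCast_self]
      ring
    push_cast at h3
    exact_mod_cast h3
  rw [Finset.sum_congr rfl (fun a (_ : a ∈ A) => congrArg g (hterm a))]
  exact hQ (((p * z.val : ℕ) : ZMod M))

private lemma reduce (A : Finset ℤ) : ∀ M : ℕ, 0 < M →
    (∃ g : ZMod M → ℕ, ∀ z : ZMod M, ∑ a ∈ A, g (z - (a : ZMod M)) = 1) →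
    ∃ S : ℕ, 0 < S ∧ (∀ p : ℕ, p.Prime → p ∣ S → p ∣ A.card) ∧
      ∃ g : ZMod S → ℕ, ∀ z : ZMod S, ∑ a ∈ A, g (z - (a : ZMod S)) = 1 := by
  intro M
  induction M using Nat.strong_induction_on with
  | _ M ih =>
    intro hM hex
    obtain ⟨g, hg⟩ := hex
    by_cases hall : ∀ p : ℕ, p.Prime → p ∣ M → p ∣ A.card
    · exact ⟨M, hM, hall, g, hg⟩
    · push_neg at hall
      obtain ⟨p, hp, hpM, hpk⟩ := hall
      haveI : NeZero M := ⟨hM.ne'⟩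
      have hQ1 : ∀ z : ZMod M, ∑ a ∈ A, g (z - ((1 : ℕ) : ZMod M) * (a : ZMod M)) = 1 := by
        intro z
        simpa using hg z
      have hQp := prime_step hp hpk g 1 hQ1
      have hQp' : ∀ z : ZMod M, ∑ a ∈ A, g (z - (p : ZMod M) * (a : ZMod M)) = 1 := by
        intro z
        have := hQp z
        rwa [show ((p * 1 : ℕ) : ZMod M) = (p : ZMod M) from by norm_num] at this
      obtain ⟨g2, hg2⟩ := descend hp hpM hM g hQp'
      exact ih (M / p) (Nat.div_lt_self hM hp.one_lt)
        (Nat.div_pos (Nat.le_of_dvd hM hpM) hp.pos) ⟨g2, hg2⟩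

private lemma tiling_of_g (A : Finset ℤ) {S : ℕ}
    (g : ZMod S → ℕ) (hg : ∀ z : ZMod S, ∑ a ∈ A, g (z - (a : ZMod S)) = 1) :
    IsTiling (↑A) {c : ℤ | g ((c : ZMod S)) ≠ 0} := by
  intro z
  obtain ⟨a0, ⟨ha0A, ha0⟩, hu⟩ := existsUnique_of_sum_eq_one (hg ((z : ZMod S)))
  refine ⟨(a0, z - a0), ⟨by exact_mod_cast ha0A, ?_, by ring⟩, ?_⟩
  · show g (((z - a0 : ℤ) : ZMod S)) ≠ 0
    have : (((z - a0 : ℤ)) : ZMod S) = (z : ZMod S) - (a0 : ZMod S) := by push_cast; ring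
    rwa [this]
  · rintro ⟨a, c⟩ ⟨haA, hcC, hac⟩
    have hc : c = z - a := by omega
    have hcast : ((c : ℤ) : ZMod S) = (z : ZMod S) - (a : ZMod S) := by
      rw [hc]; push_cast; ring
    have ha : a = a0 := by
      apply hu
      refine ⟨by exact_mod_cast haA, ?_⟩
      have : g ((z : ZMod S) - (a : ZMod S)) ≠ 0 := by rw [← hcast]; exact hcC
      exact this
    simp only [Prod.mk.injEq]
    exact ⟨ha, by omega⟩

theorem exists_tiling_with_good_period (A : Finset ℤ)
    (h : ∃ C : Set ℤ, IsTiling (↑A) C) :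
    ∃ (C : Set ℤ) (n : ℕ) (B : Finset ℤ),
      IsTiling (↑A) C ∧ 0 < n ∧
      (C = {c : ℤ | ∃ b ∈ B, ∃ z : ℤ, c = b + (n : ℤ) * z}) ∧
      (∀ c : ℤ, c ∈ C ↔ c + (n : ℤ) ∈ C) ∧
      (∀ m : ℕ, 0 < m → (∀ c : ℤ, c ∈ C ↔ c + (m : ℤ) ∈ C) → n ≤ m) ∧
      (∀ p : ℕ, p.Prime → p ∣ n → p ∣ A.card) := by
  classical
  obtain ⟨C0, ht0⟩ := h
  obtain ⟨s, hs, hper0⟩ := exists_pos_period ht0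
  set M : ℕ := s.toNat with hMdef
  have hMs : (M : ℤ) = s := Int.toNat_of_nonneg hs.le
  have hMpos : 0 < M := by omega
  have hperM : ∀ c, c ∈ C0 ↔ c + (M : ℤ) ∈ C0 := by
    intro c; rw [hMs]; exact hper0 c
  obtain ⟨gM, hgM⟩ := tilesMod_of_period ht0 hMpos hperM
  obtain ⟨S, hSpos, hSprimes, g, hg⟩ := reduce A M hMpos ⟨gM, hgM⟩
  set C : Set ℤ := {c : ℤ | g ((c : ZMod S)) ≠ 0} with hCdef
  have ht2 : IsTiling (↑A) C := tiling_of_g A g hg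
  have perS : ∀ c : ℤ, c ∈ C ↔ c + (S : ℤ) ∈ C := by
    intro c
    have : (((c + (S : ℤ)) : ℤ) : ZMod S) = ((c : ℤ) : ZMod S) := by
      push_cast [ZMod.natCast_self]; ring
    constructor
    · intro hc; show g _ ≠ 0; rw [this]; exact hc
    · intro hc; show g _ ≠ 0; rw [← this]; exact hc
  -- the subgroup of periods
  set P : AddSubgroup ℤ :=
    { carrier := {t : ℤ | ∀ c, c ∈ C ↔ c + t ∈ C}
      zero_mem' := by intro c; simp
      add_mem' := by
        intro t1 t2 h1 h2 c
        have := (h1 c).trans (h2 (c + t1))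
        rwa [show c + t1 + t2 = c + (t1 + t2) from by ring] at this
      neg_mem' := by
        intro t htP c
        have := htP (c + -t)
        rw [show c + -t + t = c from by ring] at this
        exact this.symm } with hPdef
  have memP : ∀ t : ℤ, t ∈ P ↔ (∀ c, c ∈ C ↔ c + t ∈ C) := fun t => Iff.rfl
  obtain ⟨d, hdP⟩ := Int.subgroup_cyclic P
  have memPd : ∀ t : ℤ, t ∈ P ↔ d ∣ t := by
    intro t
    rw [hdP, AddSubgroup.mem_closure_singleton]
    constructor
    · rintro ⟨k, hk⟩; exact ⟨k, by rw [← hk, zsmul_eq_mul]; push_cast; ring⟩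
    · rintro ⟨k, hk⟩; exact ⟨k, by rw [zsmul_eq_mul, hk]; push_cast; ring⟩
  have hSP : ((S : ℕ) : ℤ) ∈ P := (memP _).2 perS
  have hdS : d ∣ (S : ℤ) := (memPd _).1 hSP
  have hd0 : d ≠ 0 := by
    rintro rfl
    rw [zero_dvd_iff] at hdS
    omega
  set n : ℕ := d.natAbs with hndef
  have hn0 : 0 < n := Int.natAbs_pos.2 hd0
  have hnP : ((n : ℕ) : ℤ) ∈ P := (memPd _).2 (Int.dvd_natAbs.2 dvd_rfl)
  have pern : ∀ c : ℤ, c ∈ C ↔ c + (n : ℤ) ∈ C := (memP _).1 hnP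
  have hndvdS : n ∣ S := by
    have := Int.natAbs_dvd_natAbs.2 hdS
    simpa using this
  set B : Finset ℤ := (Finset.Ico (0 : ℤ) (n : ℤ)).filter (fun c => g ((c : ZMod S)) ≠ 0)
    with hBdef
  have hCeq : C = {c : ℤ | ∃ b ∈ B, ∃ t : ℤ, c = b + (n : ℤ) * t} := by
    ext c
    simp only [Set.mem_setOf_eq]
    constructor
    · intro hc
      refine ⟨c % (n : ℤ), ?_, c / (n : ℤ), ?_⟩
      · refine Finset.mem_filter.2 ⟨Finset.mem_Ico.2
          ⟨Int.emod_nonneg c (by exact_mod_cast hn0.ne'),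
           Int.emod_lt_of_pos c (by exact_mod_cast hn0)⟩, ?_⟩
        have h1 := period_mul pern (-(c / (n : ℤ))) c
        have h2 := Int.emod_add_mul_ediv c (n : ℤ)
        rw [show c + (n : ℤ) * (-(c / (n : ℤ))) = c % (n : ℤ) from by linarith] at h1
        exact h1.1 hc
      · have h2 := Int.emod_add_mul_ediv c (n : ℤ)
        linarith
    · rintro ⟨b, hbB, t, rfl⟩
      obtain ⟨hbIco, hbC⟩ := Finset.mem_filter.1 hbB
      exact (period_mul pern t b).1 hbC
  refine ⟨C, n, B, ht2, hn0, hCeq, pern, ?_, ?_⟩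
  · intro m hm hmper
    have hmP : ((m : ℕ) : ℤ) ∈ P := (memP _).2 hmper
    have hdm : d ∣ (m : ℤ) := (memPd _).1 hmP
    have : n ∣ m := by
      have := Int.natAbs_dvd_natAbs.2 hdm
      simpa using this
    exact Nat.le_of_dvd hm this
  · intro p hp hpn
    exact hSprimes p hp (hpn.trans hndvdS)
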